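/- Suppose F: [0,∞) → ℝ is nondecreasing and for some A, γ > 0 the Laplace–Stieltjes transform satisfies ∫_0^∞ e^{−tα} dF(α) ∼ A t^{−γ} as t → 0⁺. Then F(τ) ∼ A τ^γ / Γ(γ+1) as τ → ∞. -/

import Mathlib

open MeasureTheory Filter Set Polynomial Real

namespace KaramataAux

variable {μ : Measure ℝ} {A γ : ℝ}

/-- Integrability of the Laplace integrand for all positive `t`. -/
lemma integrable_exp (hA : 0 < A) (hγ : 0 < γ)
    (h : Tendsto (fun t : ℝ => (∫ α in Ici (0 : ℝ), Real.exp (-t * α) ∂μ) / (A * t ^ (-γ)))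
      (nhdsWithin 0 (Ioi 0)) (nhds 1)) {t : ℝ} (ht : 0 < t) :
    IntegrableOn (fun α => Real.exp (-t * α)) (Ici 0) μ := by
  have hev : ∀ᶠ s in nhdsWithin 0 (Ioi (0:ℝ)),
      (1:ℝ)/2 < (∫ α in Ici (0 : ℝ), Real.exp (-s * α) ∂μ) / (A * s ^ (-γ)) :=
    h.eventually (lt_mem_nhds (by norm_num))
  have hmem : ∀ᶠ s in nhdsWithin 0 (Ioi (0:ℝ)), s ∈ Ioo (0:ℝ) t :=
    Ioo_mem_nhdsGT_of_mem ⟨le_refl _, ht⟩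
  obtain ⟨s, hs1, hs2⟩ := (hev.and hmem).exists
  have hsint : IntegrableOn (fun α => Real.exp (-s * α)) (Ici 0) μ := by
    by_contra hni
    rw [MeasureTheory.integral_undef hni] at hs1
    simp at hs1
    linarith
  refine hsint.mono' ?_ ?_
  · exact (Real.continuous_exp.comp (continuous_const.mul continuous_id)).aestronglyMeasurable
  · refine (ae_restrict_iff' measurableSet_Ici).2 (ae_of_all _ fun α hα => ?_)
    rw [Real.norm_eq_abs, abs_of_pos (Real.exp_pos _)]
    refine Real.exp_le_exp.2 ?_
    have := mul_le_mul_of_nonneg_right hs2.2.le hα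
    linarith

lemma tendsto_scaled (hA : 0 < A) (hγ : 0 < γ)
    (h : Tendsto (fun t : ℝ => (∫ α in Ici (0 : ℝ), Real.exp (-t * α) ∂μ) / (A * t ^ (-γ)))
      (nhdsWithin 0 (Ioi 0)) (nhds 1)) {b : ℝ} (hb : 0 < b) :
    Tendsto (fun t : ℝ => (∫ α in Ici (0 : ℝ), Real.exp (-(b*t) * α) ∂μ) / (A * t ^ (-γ)))
      (nhdsWithin 0 (Ioi 0)) (nhds (b ^ (-γ))) := by
  have hmap : Tendsto (fun t : ℝ => b * t) (nhdsWithin 0 (Ioi 0)) (nhdsWithin 0 (Ioi 0)) := by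
    refine tendsto_nhdsWithin_of_tendsto_nhds_of_eventually_within _ ?_ ?_
    · have : Tendsto (fun t : ℝ => b * t) (nhds 0) (nhds (b * 0)) :=
        (continuous_const.mul continuous_id).tendsto 0
      simpa using this.mono_left nhdsWithin_le_nhds
    · exact eventually_mem_nhdsWithin.mono fun t ht => mul_pos hb ht
  have H := (h.comp hmap).mul_const (b ^ (-γ))
  rw [one_mul] at H
  refine H.congr' ?_
  filter_upwards [eventually_mem_nhdsWithin] with t (ht : 0 < t)
  have hbt : ((b*t) : ℝ) ^ (-γ) = b ^ (-γ) * t ^ (-γ) := Real.mul_rpow hb.le ht.le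
  have h1 : (0:ℝ) < b ^ (-γ) := Real.rpow_pos_of_pos hb _
  have h2 : (0:ℝ) < t ^ (-γ) := Real.rpow_pos_of_pos ht _
  simp only [Function.comp]
  rw [hbt]
  field_simp


lemma tendsto_poly (hA : 0 < A) (hγ : 0 < γ)
    (h : Tendsto (fun t : ℝ => (∫ α in Ici (0 : ℝ), Real.exp (-t * α) ∂μ) / (A * t ^ (-γ : ℝ)))
      (nhdsWithin 0 (Ioi 0)) (nhds 1)) (n : ℕ) (c : ℕ → ℝ) :
    Tendsto (fun t : ℝ =>
        (∫ α in Ici (0:ℝ), (∑ k ∈ Finset.range n, c k * Real.exp (-t*α) ^ (k+1)) ∂μ)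
          / (A * t ^ (-γ : ℝ)))
      (nhdsWithin 0 (Ioi 0)) (nhds (∑ k ∈ Finset.range n, c k * ((k:ℝ)+1) ^ (-γ : ℝ))) := by
  have hsum : Tendsto (fun t : ℝ => ∑ k ∈ Finset.range n,
      c k * ((∫ α in Ici (0:ℝ), Real.exp (-(((k:ℝ)+1)*t)*α) ∂μ) / (A * t ^ (-γ : ℝ))))
      (nhdsWithin 0 (Ioi 0)) (nhds (∑ k ∈ Finset.range n, c k * ((k:ℝ)+1) ^ (-γ : ℝ))) :=
    tendsto_finset_sum _ fun k _ =>
      (tendsto_scaled hA hγ h (by positivity)).const_mul (c k)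
  refine hsum.congr' ?_
  filter_upwards [eventually_mem_nhdsWithin] with t (ht : 0 < t)
  have hfun : (fun α => ∑ k ∈ Finset.range n, c k * Real.exp (-t*α) ^ (k+1))
      = fun α => ∑ k ∈ Finset.range n, c k * Real.exp (-(((k:ℝ)+1)*t)*α) := by
    funext α
    refine Finset.sum_congr rfl fun k _ => ?_
    congr 1
    rw [← Real.exp_nat_mul]
    congr 1
    push_cast
    ring
  rw [eq_comm, hfun, integral_finset_sum _ fun (k : ℕ) _ =>
    ((integrable_exp hA hγ h (show (0:ℝ) < ((k:ℝ)+1)*t by positivity)).const_mul (c k) :),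
    Finset.sum_div]
  refine Finset.sum_congr rfl fun k _ => ?_
  rw [integral_const_mul, mul_div_assoc]

lemma gamma_integrable (hγ : 0 < γ) {b : ℝ} (hb : 0 < b) :
    IntegrableOn (fun u : ℝ => u ^ (γ-1) * Real.exp (-(b*u))) (Ioi 0) := by
  have h := integrableOn_rpow_mul_exp_neg_mul_rpow (by linarith : (-1:ℝ) < γ-1) one_pos hb
  refine h.congr_fun (fun x hx => ?_) measurableSet_Ioi
  simp only [Real.rpow_one, neg_mul]

lemma gamma_int (hγ : 0 < γ) {b : ℝ} (hb : 0 < b) :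
    ∫ u in Ioi (0:ℝ), u ^ (γ-1) * Real.exp (-(b*u)) = Real.Gamma γ * b ^ (-γ : ℝ) := by
  have h1 : ∀ x ∈ Ioi (0:ℝ), x ^ (γ-1) * Real.exp (-(b*x))
      = x ^ (γ-1) * Real.exp (-b * x ^ (1:ℝ)) := fun x hx => by rw [Real.rpow_one, neg_mul]
  rw [setIntegral_congr_fun measurableSet_Ioi h1,
    integral_rpow_mul_exp_neg_mul_rpow one_pos (by linarith) hb]
  have h2 : (γ - 1 + 1) / 1 = γ := by ring
  have h3 : -(γ - 1 + 1) / 1 = -γ := by ring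
  rw [h2, h3]
  ring

lemma int_poly_integrable (hγ : 0 < γ) (n : ℕ) (c : ℕ → ℝ) :
    IntegrableOn (fun u : ℝ =>
      (∑ k ∈ Finset.range n, c k * Real.exp (-u) ^ (k+1)) * u ^ (γ-1)) (Ioi 0) := by
  have : (fun u : ℝ => (∑ k ∈ Finset.range n, c k * Real.exp (-u) ^ (k+1)) * u ^ (γ-1))
      = fun u : ℝ => ∑ k ∈ Finset.range n, c k * (u ^ (γ-1) * Real.exp (-(((k:ℝ)+1)*u))) := by
    funext u
    rw [Finset.sum_mul]
    refine Finset.sum_congr rfl fun k _ => ?_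
    rw [← Real.exp_nat_mul]
    push_cast
    ring_nf
  rw [this]
  exact integrable_finset_sum _ fun k _ =>
    ((gamma_integrable hγ (by positivity : (0:ℝ) < (k:ℝ)+1)).const_mul (c k) :)

lemma int_poly (hγ : 0 < γ) (n : ℕ) (c : ℕ → ℝ) :
    ∫ u in Ioi (0:ℝ), (∑ k ∈ Finset.range n, c k * Real.exp (-u) ^ (k+1)) * u ^ (γ-1)
      = Real.Gamma γ * ∑ k ∈ Finset.range n, c k * ((k:ℝ)+1) ^ (-γ : ℝ) := by
  have hfun : ∀ u ∈ Ioi (0:ℝ),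
      (∑ k ∈ Finset.range n, c k * Real.exp (-u) ^ (k+1)) * u ^ (γ-1)
      = ∑ k ∈ Finset.range n, c k * (u ^ (γ-1) * Real.exp (-(((k:ℝ)+1)*u))) := by
    intro u _
    rw [Finset.sum_mul]
    refine Finset.sum_congr rfl fun k _ => ?_
    rw [← Real.exp_nat_mul]
    push_cast
    ring_nf
  rw [setIntegral_congr_fun measurableSet_Ioi hfun,
    integral_finset_sum _ fun (k : ℕ) _ =>
      ((gamma_integrable hγ (by positivity : (0:ℝ) < (k:ℝ)+1)).const_mul (c k) :),
    Finset.mul_sum]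
  refine Finset.sum_congr rfl fun k _ => ?_
  rw [integral_const_mul, gamma_int hγ (by positivity : (0:ℝ) < (k:ℝ)+1)]
  ring

lemma poly_sum_eq (p : Polynomial ℝ) {n : ℕ} (hn : p.natDegree < n) (v : ℝ) :
    ∑ k ∈ Finset.range n, p.coeff k * v ^ (k+1) = p.eval v * v := by
  rw [Polynomial.eval_eq_sum_range' hn, Finset.sum_mul]
  exact Finset.sum_congr rfl fun k _ => by ring

lemma integrableOn_rpow_Ioc (hγ : 0 < γ) {a c : ℝ} :
    IntegrableOn (fun u : ℝ => u ^ (γ-1)) (Ioc a c) := by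
  rcases le_total a c with hac | hac
  · exact (intervalIntegrable_iff_integrableOn_Ioc_of_le hac).1
      (intervalIntegral.intervalIntegrable_rpow' (by linarith))
  · simp [Ioc_eq_empty_of_le hac]

lemma indicator_integrableOn (hγ : 0 < γ) {a c : ℝ} :
    IntegrableOn ((Ioc a c).indicator (fun u : ℝ => u ^ (γ-1))) (Ioi 0) := by
  rw [IntegrableOn, integrable_indicator_iff measurableSet_Ioc, IntegrableOn,
    Measure.restrict_restrict measurableSet_Ioc]
  exact (integrableOn_rpow_Ioc hγ).mono_set inter_subset_left

lemma indicator_integral (hγ : 0 < γ) {a c : ℝ} (ha : 0 ≤ a) (hac : a ≤ c) :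
    ∫ u in Ioi (0:ℝ), (Ioc a c).indicator (fun u : ℝ => u ^ (γ-1)) u
      = (c ^ γ - a ^ γ) / γ := by
  rw [setIntegral_indicator measurableSet_Ioc]
  have h1 : Ioi (0:ℝ) ∩ Ioc a c = Ioc a c := by
    refine inter_eq_right.2 fun u hu => ?_
    exact lt_of_le_of_lt ha hu.1
  rw [h1, ← intervalIntegral.integral_of_le hac, integral_rpow (Or.inl (by linarith))]
  have h2 : γ - 1 + 1 = γ := by ring
  rw [h2]

set_option maxHeartbeats 2000000 in
lemma approx (hγ : 0 < γ) {ε : ℝ} (hε : 0 < ε) :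
    ∃ (n : ℕ) (c₁ c₂ : ℕ → ℝ),
      (∀ v ∈ Icc (0:ℝ) 1, ∑ k ∈ Finset.range n, c₁ k * v ^ (k+1)
          ≤ (if Real.exp (-1) ≤ v then (1:ℝ) else 0)) ∧
      (∀ v ∈ Icc (0:ℝ) 1, (if Real.exp (-1) ≤ v then (1:ℝ) else 0)
          ≤ ∑ k ∈ Finset.range n, c₂ k * v ^ (k+1)) ∧
      (1/Real.Gamma (γ+1) - ε ≤ ∑ k ∈ Finset.range n, c₁ k * ((k:ℝ)+1) ^ (-γ:ℝ)) ∧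
      (∑ k ∈ Finset.range n, c₁ k * ((k:ℝ)+1) ^ (-γ:ℝ) ≤ 1/Real.Gamma (γ+1)) ∧
      (1/Real.Gamma (γ+1) ≤ ∑ k ∈ Finset.range n, c₂ k * ((k:ℝ)+1) ^ (-γ:ℝ)) ∧
      (∑ k ∈ Finset.range n, c₂ k * ((k:ℝ)+1) ^ (-γ:ℝ) ≤ 1/Real.Gamma (γ+1) + ε) := by
  have hΓ : 0 < Real.Gamma γ := Real.Gamma_pos_of_pos hγ
  set b : ℝ := Real.exp (-1) with hbdef
  have hb0 : 0 < b := Real.exp_pos _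
  -- choose the window half-width w
  have hWcont : ContinuousAt (fun w : ℝ => ((1+w)^γ - (1-w)^γ)/γ) 0 := by
    refine ContinuousAt.div_const (ContinuousAt.sub ?_ ?_) _
    · exact (Real.continuousAt_rpow_const _ _ (Or.inl (by norm_num))).comp
        ((continuous_const.add continuous_id).continuousAt)
    · exact (Real.continuousAt_rpow_const _ _ (Or.inl (by norm_num))).comp
        ((continuous_const.sub continuous_id).continuousAt)
  have hW0 : Tendsto (fun w : ℝ => ((1+w)^γ - (1-w)^γ)/γ) (nhdsWithin 0 (Ioi 0)) (nhds 0) := by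
    have := hWcont.tendsto.mono_left (nhdsWithin_le_nhds (s := Ioi (0:ℝ)))
    simpa [Real.one_rpow] using this
  have hWev : ∀ᶠ w in nhdsWithin (0:ℝ) (Ioi 0),
      ((1+w)^γ - (1-w)^γ)/γ < Real.Gamma γ * (ε/2) :=
    hW0.eventually (gt_mem_nhds (mul_pos hΓ (half_pos hε)))
  obtain ⟨w, hWsmall, hw0, hw2⟩ :
      ∃ w : ℝ, ((1+w)^γ - (1-w)^γ)/γ < Real.Gamma γ * (ε/2) ∧ 0 < w ∧ w < 1/2 := by
    obtain ⟨w, h1, h2⟩ := (hWev.and (Ioo_mem_nhdsGT_of_mem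
      (⟨le_refl _, by norm_num⟩ : (0:ℝ) ∈ Ico 0 (1/2)))).exists
    exact ⟨w, h1, h2.1, h2.2⟩
  set d₁ : ℝ := Real.exp (-(1+w)) with hd₁def
  set d₂ : ℝ := Real.exp (-(1-w)) with hd₂def
  have hd₁0 : 0 < d₁ := Real.exp_pos _
  have hd₁b : d₁ < b := Real.exp_lt_exp.2 (by linarith)
  have hbd₂ : b < d₂ := Real.exp_lt_exp.2 (by linarith)
  set g₂ : ℝ → ℝ := fun v => min 1 (max 0 ((v - d₁)/(b - d₁))) with hg₂def
  set g₁ : ℝ → ℝ := fun v => min 1 (max 0 ((v - b)/(d₂ - b))) with hg₁def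
  set H₂ : ℝ → ℝ := fun v => g₂ v / max v d₁ with hH₂def
  set H₁ : ℝ → ℝ := fun v => g₁ v / max v b with hH₁def
  have hg₂0 : ∀ v, 0 ≤ g₂ v := fun v => le_min zero_le_one (le_max_left 0 _)
  have hg₁0 : ∀ v, 0 ≤ g₁ v := fun v => le_min zero_le_one (le_max_left 0 _)
  have hg₂1 : ∀ v, g₂ v ≤ 1 := fun v => min_le_left _ _
  have hg₁1 : ∀ v, g₁ v ≤ 1 := fun v => min_le_left _ _
  have hg₂zero : ∀ v, v ≤ d₁ → g₂ v = 0 := by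
    intro v hv
    have : (v - d₁)/(b - d₁) ≤ 0 :=
      div_nonpos_of_nonpos_of_nonneg (by linarith) (by linarith)
    simp [hg₂def, max_eq_left this, min_eq_right zero_le_one]
  have hg₁zero : ∀ v, v ≤ b → g₁ v = 0 := by
    intro v hv
    have : (v - b)/(d₂ - b) ≤ 0 :=
      div_nonpos_of_nonpos_of_nonneg (by linarith) (by linarith)
    simp [hg₁def, max_eq_left this, min_eq_right zero_le_one]
  have hg₂one : ∀ v, b ≤ v → g₂ v = 1 := by
    intro v hv
    have h1 : (1:ℝ) ≤ (v - d₁)/(b - d₁) :=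
      (one_le_div (by linarith)).2 (by linarith)
    exact min_eq_left (le_trans h1 (le_max_right 0 _))
  have hg₁one : ∀ v, d₂ ≤ v → g₁ v = 1 := by
    intro v hv
    have h1 : (1:ℝ) ≤ (v - b)/(d₂ - b) :=
      (one_le_div (by linarith)).2 (by linarith)
    exact min_eq_left (le_trans h1 (le_max_right 0 _))
  have hvH₂ : ∀ v, 0 ≤ v → v * H₂ v = g₂ v := by
    intro v hv
    rcases le_or_gt v d₁ with hvd | hvd
    · rw [hg₂zero v hvd] at *
      simp [hH₂def, hg₂zero v hvd]
    · rw [hH₂def]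
      simp only
      rw [max_eq_left hvd.le, mul_div_cancel₀ _ (ne_of_gt (lt_trans hd₁0 hvd))]
  have hvH₁ : ∀ v, 0 ≤ v → v * H₁ v = g₁ v := by
    intro v hv
    rcases le_or_gt v b with hvd | hvd
    · simp [hH₁def, hg₁zero v hvd]
    · rw [hH₁def]
      simp only
      rw [max_eq_left hvd.le, mul_div_cancel₀ _ (ne_of_gt (lt_trans hb0 hvd))]
  -- continuity
  have hg₂cont : Continuous g₂ :=
    continuous_const.min (continuous_const.max ((continuous_id.sub continuous_const).div_const _))
  have hg₁cont : Continuous g₁ :=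
    continuous_const.min (continuous_const.max ((continuous_id.sub continuous_const).div_const _))
  have hH₂cont : Continuous H₂ :=
    hg₂cont.div (continuous_id.max continuous_const)
      (fun v => ne_of_gt (lt_of_lt_of_le hd₁0 (le_max_right v d₁)))
  have hH₁cont : Continuous H₁ :=
    hg₁cont.div (continuous_id.max continuous_const)
      (fun v => ne_of_gt (lt_of_lt_of_le hb0 (le_max_right v b)))
  -- Weierstrass
  obtain ⟨Q₁, hQ₁⟩ := exists_polynomial_near_of_continuousOn 0 1 H₁
    hH₁cont.continuousOn (ε/4) (by positivity)
  obtain ⟨Q₂, hQ₂⟩ := exists_polynomial_near_of_continuousOn 0 1 H₂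
    hH₂cont.continuousOn (ε/4) (by positivity)
  -- window bound
  have hdiff : ∀ u : ℝ, 0 < u → g₂ (Real.exp (-u)) - g₁ (Real.exp (-u))
      ≤ (if u ∈ Ioc (1-w) (1+w) then (1:ℝ) else 0) := by
    intro u hu
    by_cases hmem : u ∈ Ioc (1-w) (1+w)
    · rw [if_pos hmem]
      have := hg₂1 (Real.exp (-u))
      have := hg₁0 (Real.exp (-u))
      linarith
    · rw [if_neg hmem]
      rw [mem_Ioc, not_and_or, not_lt, not_le] at hmem
      rcases hmem with hle | hgt
      · have : d₂ ≤ Real.exp (-u) := Real.exp_le_exp.2 (by linarith)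
        rw [hg₁one _ this]
        have := hg₂1 (Real.exp (-u))
        linarith
      · have : Real.exp (-u) ≤ d₁ := Real.exp_le_exp.2 (by linarith)
        rw [hg₂zero _ this]
        have := hg₁0 (Real.exp (-u))
        linarith
  -- the polynomials with zero constant term
  set q₁ : Polynomial ℝ := Q₁ - Polynomial.C (ε/4) with hq₁def
  set q₂ : Polynomial ℝ := Q₂ + Polynomial.C (ε/4) with hq₂def
  set n : ℕ := max (q₁.natDegree + 1) (q₂.natDegree + 1) with hndef
  have hn₁ : q₁.natDegree < n := lt_of_lt_of_le (Nat.lt_succ_self _) (le_max_left _ _)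
  have hn₂ : q₂.natDegree < n := lt_of_lt_of_le (Nat.lt_succ_self _) (le_max_right _ _)
  have heval₁ : ∀ v : ℝ, q₁.eval v = Q₁.eval v - ε/4 := by
    intro v; simp [hq₁def]
  have heval₂ : ∀ v : ℝ, q₂.eval v = Q₂.eval v + ε/4 := by
    intro v; simp [hq₂def]
  -- pointwise sandwich on [0,1]
  have hlow : ∀ v ∈ Icc (0:ℝ) 1, ∑ k ∈ Finset.range n, q₁.coeff k * v ^ (k+1)
      ≤ (if b ≤ v then (1:ℝ) else 0) := by
    intro v hv
    rw [poly_sum_eq q₁ hn₁ v, heval₁ v]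
    have h1 : Q₁.eval v - ε/4 ≤ H₁ v := by
      have := abs_lt.1 (hQ₁ v hv); linarith
    have h2 : (Q₁.eval v - ε/4) * v ≤ H₁ v * v := mul_le_mul_of_nonneg_right h1 hv.1
    have h3 : H₁ v * v = g₁ v := by rw [mul_comm]; exact hvH₁ v hv.1
    by_cases hbv : b ≤ v
    · rw [if_pos hbv]
      have := hg₁1 v; linarith
    · rw [if_neg hbv]
      push_neg at hbv
      rw [hg₁zero v hbv.le] at h3
      linarith
  have hhigh : ∀ v ∈ Icc (0:ℝ) 1, (if b ≤ v then (1:ℝ) else 0)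
      ≤ ∑ k ∈ Finset.range n, q₂.coeff k * v ^ (k+1) := by
    intro v hv
    rw [poly_sum_eq q₂ hn₂ v, heval₂ v]
    have h1 : H₂ v ≤ Q₂.eval v + ε/4 := by
      have := abs_lt.1 (hQ₂ v hv); linarith
    have h2 : H₂ v * v ≤ (Q₂.eval v + ε/4) * v := mul_le_mul_of_nonneg_right h1 hv.1
    have h3 : H₂ v * v = g₂ v := by rw [mul_comm]; exact hvH₂ v hv.1
    by_cases hbv : b ≤ v
    · rw [if_pos hbv]
      rw [hg₂one v hbv] at h3
      linarith
    · rw [if_neg hbv]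
      have := hg₂0 v
      linarith
  -- now the integral estimates
  set L₁ : ℝ := ∑ k ∈ Finset.range n, q₁.coeff k * ((k:ℝ)+1) ^ (-γ:ℝ) with hL₁def
  set L₂ : ℝ := ∑ k ∈ Finset.range n, q₂.coeff k * ((k:ℝ)+1) ^ (-γ:ℝ) with hL₂def
  have hJ₁ : ∫ u in Ioi (0:ℝ), (∑ k ∈ Finset.range n, q₁.coeff k * Real.exp (-u) ^ (k+1))
      * u ^ (γ-1) = Real.Gamma γ * L₁ := int_poly hγ n _
  have hJ₂ : ∫ u in Ioi (0:ℝ), (∑ k ∈ Finset.range n, q₂.coeff k * Real.exp (-u) ^ (k+1))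
      * u ^ (γ-1) = Real.Gamma γ * L₂ := int_poly hγ n _
  set ind₁ : ℝ → ℝ := (Ioc (0:ℝ) 1).indicator (fun u => u ^ (γ-1)) with hind₁def
  set indW : ℝ → ℝ := (Ioc (1-w) (1+w)).indicator (fun u => u ^ (γ-1)) with hindWdef
  have hvmem : ∀ u : ℝ, u ∈ Ioi (0:ℝ) → Real.exp (-u) ∈ Icc (0:ℝ) 1 := by
    intro u hu
    constructor
    · exact (Real.exp_pos _).le
    · rw [← Real.exp_zero]
      exact Real.exp_le_exp.2 (by simpa using (le_of_lt hu))
  have hbiff : ∀ u : ℝ, u ∈ Ioi (0:ℝ) → ((b ≤ Real.exp (-u)) ↔ u ∈ Ioc (0:ℝ) 1) := by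
    intro u hu
    rw [hbdef, Real.exp_le_exp, mem_Ioc]
    constructor
    · intro h1; exact ⟨hu, by linarith⟩
    · intro h1; linarith [h1.2]
  have hf_ind : ∀ u : ℝ, u ∈ Ioi (0:ℝ) →
      (if b ≤ Real.exp (-u) then (1:ℝ) else 0) * u ^ (γ-1) = ind₁ u := by
    intro u hu
    rw [hind₁def, indicator_apply]
    by_cases hmem : u ∈ Ioc (0:ℝ) 1
    · rw [if_pos hmem, if_pos ((hbiff u hu).2 hmem), one_mul]
    · rw [if_neg hmem, if_neg (fun hc => hmem ((hbiff u hu).1 hc)), zero_mul]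
  have hrpow_nonneg : ∀ u : ℝ, u ∈ Ioi (0:ℝ) → (0:ℝ) ≤ u ^ (γ-1) := by
    intro u hu
    exact (Real.rpow_pos_of_pos hu _).le
  -- comparison (a): J(P₁) ≤ ∫ ind₁
  have hcompa : Real.Gamma γ * L₁ ≤ ∫ u in Ioi (0:ℝ), ind₁ u := by
    rw [← hJ₁]
    refine setIntegral_mono_on (int_poly_integrable hγ n _) (indicator_integrableOn hγ)
      measurableSet_Ioi (fun u hu => ?_)
    rw [← hf_ind u hu]
    exact mul_le_mul_of_nonneg_right (hlow _ (hvmem u hu)) (hrpow_nonneg u hu)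
  have hcompb : (∫ u in Ioi (0:ℝ), ind₁ u) ≤ Real.Gamma γ * L₂ := by
    rw [← hJ₂]
    refine setIntegral_mono_on (indicator_integrableOn hγ) (int_poly_integrable hγ n _)
      measurableSet_Ioi (fun u hu => ?_)
    rw [← hf_ind u hu]
    exact mul_le_mul_of_nonneg_right (hhigh _ (hvmem u hu)) (hrpow_nonneg u hu)
  -- comparison (c): J(P₂) ≤ ∫ ind₁ + ∫ indW + (ε/2) Γγ
  have hchi_ind : ∀ u : ℝ, u ∈ Ioi (0:ℝ) →
      (if u ∈ Ioc (1-w) (1+w) then (1:ℝ) else 0) * u ^ (γ-1) = indW u := by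
    intro u hu
    rw [hindWdef, indicator_apply]
    by_cases hmem : u ∈ Ioc (1-w) (1+w)
    · rw [if_pos hmem, if_pos hmem, one_mul]
    · rw [if_neg hmem, if_neg hmem, zero_mul]
  have hexp1 : ∀ u : ℝ, u ^ (γ-1) * Real.exp (-(1*u)) = Real.exp (-u) * u ^ (γ-1) := by
    intro u; rw [one_mul, mul_comm]
  have hcompc : Real.Gamma γ * L₂ ≤ (∫ u in Ioi (0:ℝ), ind₁ u)
      + (∫ u in Ioi (0:ℝ), indW u) + (ε/2) * Real.Gamma γ := by
    rw [← hJ₂]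
    have hint : IntegrableOn (fun u : ℝ => ind₁ u + indW u
        + (ε/2) * (u ^ (γ-1) * Real.exp (-(1*u)))) (Ioi 0) :=
      ((indicator_integrableOn hγ).add (indicator_integrableOn hγ)).add
        ((gamma_integrable hγ one_pos).const_mul _)
    have hmono : (∫ u in Ioi (0:ℝ), (∑ k ∈ Finset.range n,
        q₂.coeff k * Real.exp (-u) ^ (k+1)) * u ^ (γ-1))
        ≤ ∫ u in Ioi (0:ℝ), (ind₁ u + indW u + (ε/2) * (u ^ (γ-1) * Real.exp (-(1*u)))) := by
      refine setIntegral_mono_on (int_poly_integrable hγ n _) hint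
        measurableSet_Ioi (fun u hu => ?_)
      set v : ℝ := Real.exp (-u) with hvdef
      have hv : v ∈ Icc (0:ℝ) 1 := hvmem u hu
      have h1 : H₂ v ≤ Q₂.eval v + ε/4 := by
        have := abs_lt.1 (hQ₂ v hv); linarith
      have h2 : g₂ v ≤ (Q₂.eval v + ε/4) * v := by
        rw [← hvH₂ v hv.1]
        calc v * H₂ v ≤ v * (Q₂.eval v + ε/4) := mul_le_mul_of_nonneg_left h1 hv.1
        _ = (Q₂.eval v + ε/4) * v := by ring
      have h3 : ∑ k ∈ Finset.range n, q₂.coeff k * v ^ (k+1) = (Q₂.eval v + ε/4) * v := by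
        rw [poly_sum_eq q₂ hn₂ v, heval₂ v]
      have h4 : (Q₂.eval v + ε/4) * v ≤ g₂ v + (ε/2) * v := by
        have h5 : Q₂.eval v ≤ H₂ v + ε/4 := by
          have := abs_lt.1 (hQ₂ v hv); linarith
        have h6 : (Q₂.eval v + ε/4) * v ≤ (H₂ v + ε/2) * v := by
          refine mul_le_mul_of_nonneg_right (by linarith) hv.1
        have h7 : (H₂ v + ε/2) * v = g₂ v + (ε/2) * v := by
          rw [add_mul, mul_comm (H₂ v) v, hvH₂ v hv.1]
        linarith
      have h8 : g₂ v ≤ (if b ≤ v then (1:ℝ) else 0)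
          + (if u ∈ Ioc (1-w) (1+w) then (1:ℝ) else 0) := by
        have h9 := hdiff u hu
        rw [← hvdef] at h9
        by_cases hbv : b ≤ v
        · rw [if_pos hbv]
          by_cases hmem : u ∈ Ioc (1-w) (1+w)
          · rw [if_pos hmem]; linarith [hg₂1 v]
          · rw [if_neg hmem]; linarith [hg₂1 v]
        · push_neg at hbv
          rw [if_neg (not_le.2 hbv), hg₁zero v hbv.le] at *
          by_cases hmem : u ∈ Ioc (1-w) (1+w)
          · rw [if_pos hmem]; linarith [hg₂1 v]
          · rw [if_neg hmem] at h9 ⊢; linarith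
      calc (∑ k ∈ Finset.range n, q₂.coeff k * v ^ (k+1)) * u ^ (γ-1)
          = ((Q₂.eval v + ε/4) * v) * u ^ (γ-1) := by rw [h3]
        _ ≤ (g₂ v + (ε/2) * v) * u ^ (γ-1) :=
            mul_le_mul_of_nonneg_right h4 (hrpow_nonneg u hu)
        _ ≤ (((if b ≤ v then (1:ℝ) else 0) + (if u ∈ Ioc (1-w) (1+w) then (1:ℝ) else 0))
              + (ε/2) * v) * u ^ (γ-1) :=
            mul_le_mul_of_nonneg_right (by linarith) (hrpow_nonneg u hu)
        _ = ind₁ u + indW u + (ε/2) * (u ^ (γ-1) * Real.exp (-(1*u))) := by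
            rw [add_mul, add_mul, hf_ind u hu, hchi_ind u hu, hexp1 u]
            ring
    have hsplit : ∫ u in Ioi (0:ℝ), (ind₁ u + indW u + (ε/2) * (u ^ (γ-1) * Real.exp (-(1*u))))
        = (∫ u in Ioi (0:ℝ), ind₁ u) + (∫ u in Ioi (0:ℝ), indW u)
          + (ε/2) * ∫ u in Ioi (0:ℝ), (u ^ (γ-1) * Real.exp (-(1*u))) := by
      have hind₁int : IntegrableOn ind₁ (Ioi 0) := indicator_integrableOn hγ
      have hindWint : IntegrableOn indW (Ioi 0) := indicator_integrableOn hγ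
      have hintAB : IntegrableOn (fun u : ℝ => ind₁ u + indW u) (Ioi 0) :=
        hind₁int.add hindWint
      have hintC : IntegrableOn (fun u : ℝ => (ε/2) * (u ^ (γ-1) * Real.exp (-(1*u))))
          (Ioi 0) := (gamma_integrable hγ one_pos).const_mul _
      rw [integral_add hintAB hintC, integral_add hind₁int hindWint, integral_const_mul]
    have hgam : ∫ u in Ioi (0:ℝ), (u ^ (γ-1) * Real.exp (-(1*u))) = Real.Gamma γ := by
      rw [gamma_int hγ one_pos, Real.one_rpow, mul_one]
    rw [hsplit, hgam] at hmono
    linarith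
  -- comparison (d)
  have hcompd : (∫ u in Ioi (0:ℝ), ind₁ u) - (∫ u in Ioi (0:ℝ), indW u)
      - (ε/2) * Real.Gamma γ ≤ Real.Gamma γ * L₁ := by
    rw [← hJ₁]
    have hint : IntegrableOn (fun u : ℝ => ind₁ u - indW u
        - (ε/2) * (u ^ (γ-1) * Real.exp (-(1*u)))) (Ioi 0) :=
      ((indicator_integrableOn hγ).sub (indicator_integrableOn hγ)).sub
        ((gamma_integrable hγ one_pos).const_mul _)
    have hmono : (∫ u in Ioi (0:ℝ), (ind₁ u - indW u - (ε/2) * (u ^ (γ-1) * Real.exp (-(1*u)))))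
        ≤ ∫ u in Ioi (0:ℝ), (∑ k ∈ Finset.range n,
          q₁.coeff k * Real.exp (-u) ^ (k+1)) * u ^ (γ-1) := by
      refine setIntegral_mono_on hint (int_poly_integrable hγ n _)
        measurableSet_Ioi (fun u hu => ?_)
      set v : ℝ := Real.exp (-u) with hvdef
      have hv : v ∈ Icc (0:ℝ) 1 := hvmem u hu
      have h1 : Q₁.eval v - ε/4 ≥ H₁ v - ε/2 := by
        have := abs_lt.1 (hQ₁ v hv); linarith
      have h3 : ∑ k ∈ Finset.range n, q₁.coeff k * v ^ (k+1) = (Q₁.eval v - ε/4) * v := by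
        rw [poly_sum_eq q₁ hn₁ v, heval₁ v]
      have h4 : g₁ v - (ε/2) * v ≤ (Q₁.eval v - ε/4) * v := by
        have h6 : (H₁ v - ε/2) * v ≤ (Q₁.eval v - ε/4) * v :=
          mul_le_mul_of_nonneg_right h1 hv.1
        have h7 : (H₁ v - ε/2) * v = g₁ v - (ε/2) * v := by
          rw [sub_mul, mul_comm (H₁ v) v, hvH₁ v hv.1]
        linarith
      have h8 : (if b ≤ v then (1:ℝ) else 0)
          - (if u ∈ Ioc (1-w) (1+w) then (1:ℝ) else 0) ≤ g₁ v := by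
        have h9 := hdiff u hu
        rw [← hvdef] at h9
        by_cases hbv : b ≤ v
        · rw [if_pos hbv, hg₂one v hbv] at *
          by_cases hmem : u ∈ Ioc (1-w) (1+w)
          · rw [if_pos hmem] at h9 ⊢; linarith [hg₁0 v]
          · rw [if_neg hmem] at h9 ⊢; linarith
        · rw [if_neg hbv]
          by_cases hmem : u ∈ Ioc (1-w) (1+w)
          · rw [if_pos hmem]; linarith [hg₁0 v]
          · rw [if_neg hmem]; linarith [hg₁0 v]
      calc ind₁ u - indW u - (ε/2) * (u ^ (γ-1) * Real.exp (-(1*u)))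
          = (((if b ≤ v then (1:ℝ) else 0) - (if u ∈ Ioc (1-w) (1+w) then (1:ℝ) else 0))
              - (ε/2) * v) * u ^ (γ-1) := by
            rw [sub_mul, sub_mul, hf_ind u hu, hchi_ind u hu, hexp1 u]
            ring
        _ ≤ (g₁ v - (ε/2) * v) * u ^ (γ-1) :=
            mul_le_mul_of_nonneg_right (by linarith) (hrpow_nonneg u hu)
        _ ≤ ((Q₁.eval v - ε/4) * v) * u ^ (γ-1) :=
            mul_le_mul_of_nonneg_right h4 (hrpow_nonneg u hu)
        _ = (∑ k ∈ Finset.range n, q₁.coeff k * v ^ (k+1)) * u ^ (γ-1) := by rw [h3]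
    have hsplit : ∫ u in Ioi (0:ℝ), (ind₁ u - indW u - (ε/2) * (u ^ (γ-1) * Real.exp (-(1*u))))
        = (∫ u in Ioi (0:ℝ), ind₁ u) - (∫ u in Ioi (0:ℝ), indW u)
          - (ε/2) * ∫ u in Ioi (0:ℝ), (u ^ (γ-1) * Real.exp (-(1*u))) := by
      have hind₁int : IntegrableOn ind₁ (Ioi 0) := indicator_integrableOn hγ
      have hindWint : IntegrableOn indW (Ioi 0) := indicator_integrableOn hγ
      have hintAB : IntegrableOn (fun u : ℝ => ind₁ u - indW u) (Ioi 0) :=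
        hind₁int.sub hindWint
      have hintC : IntegrableOn (fun u : ℝ => (ε/2) * (u ^ (γ-1) * Real.exp (-(1*u))))
          (Ioi 0) := (gamma_integrable hγ one_pos).const_mul _
      rw [integral_sub hintAB hintC, integral_sub hind₁int hindWint, integral_const_mul]
    have hgam : ∫ u in Ioi (0:ℝ), (u ^ (γ-1) * Real.exp (-(1*u))) = Real.Gamma γ := by
      rw [gamma_int hγ one_pos, Real.one_rpow, mul_one]
    rw [hsplit, hgam] at hmono
    linarith
  -- numeric values of the two indicator integrals
  have hI₁ : ∫ u in Ioi (0:ℝ), ind₁ u = 1/γ := by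
    rw [hind₁def, indicator_integral hγ le_rfl zero_le_one, Real.one_rpow,
      Real.zero_rpow hγ.ne']
    ring
  have hIW : ∫ u in Ioi (0:ℝ), indW u = ((1+w)^γ - (1-w)^γ)/γ :=
    indicator_integral hγ (by linarith) (by linarith)
  rw [hI₁] at hcompa hcompb hcompc hcompd
  rw [hIW] at hcompc hcompd
  -- final arithmetic
  have hΓ1 : Real.Gamma (γ+1) = γ * Real.Gamma γ := Real.Gamma_add_one hγ.ne'
  have hγΓ : 0 < γ * Real.Gamma γ := mul_pos hγ hΓ
  refine ⟨n, q₁.coeff, q₂.coeff, hlow, hhigh, ?_, ?_, ?_, ?_⟩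
  · rw [hΓ1, ← hL₁def, ← mul_le_mul_iff_of_pos_left hΓ]
    have : Real.Gamma γ * (1/(γ * Real.Gamma γ) - ε)
        = 1/γ - Real.Gamma γ * ε := by field_simp
    rw [this]
    linarith
  · rw [hΓ1, ← hL₁def, ← mul_le_mul_iff_of_pos_left hΓ]
    have : Real.Gamma γ * (1/(γ * Real.Gamma γ)) = 1/γ := by field_simp [mul_comm]
    rw [this]
    linarith
  · rw [hΓ1, ← hL₂def, ← mul_le_mul_iff_of_pos_left hΓ]
    have : Real.Gamma γ * (1/(γ * Real.Gamma γ)) = 1/γ := by field_simp [mul_comm]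
    rw [this]
    linarith
  · rw [hΓ1, ← hL₂def, ← mul_le_mul_iff_of_pos_left hΓ]
    have : Real.Gamma γ * (1/(γ * Real.Gamma γ) + ε)
        = 1/γ + Real.Gamma γ * ε := by field_simp
    rw [this]
    linarith

lemma integrable_poly_exp (hA : 0 < A) (hγ : 0 < γ)
    (h : Tendsto (fun t : ℝ => (∫ α in Ici (0 : ℝ), Real.exp (-t * α) ∂μ) / (A * t ^ (-γ)))
      (nhdsWithin 0 (Ioi 0)) (nhds 1)) {t : ℝ} (ht : 0 < t) (n : ℕ) (c : ℕ → ℝ) :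
    IntegrableOn (fun α : ℝ => ∑ k ∈ Finset.range n, c k * Real.exp (-t*α) ^ (k+1))
      (Ici 0) μ := by
  have hfun : (fun α : ℝ => ∑ k ∈ Finset.range n, c k * Real.exp (-t*α) ^ (k+1))
      = fun α : ℝ => ∑ k ∈ Finset.range n, c k * Real.exp (-(((k:ℝ)+1)*t)*α) := by
    funext α
    refine Finset.sum_congr rfl fun k _ => ?_
    congr 1
    rw [← Real.exp_nat_mul]
    congr 1
    push_cast
    ring
  rw [hfun]
  exact integrable_finset_sum _ fun (k : ℕ) _ =>
    ((integrable_exp hA hγ h (show (0:ℝ) < ((k:ℝ)+1)*t by positivity)).const_mul (c k) :)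

end KaramataAux

open KaramataAux

set_option maxHeartbeats 1000000 in
/-- Karamata's Tauberian theorem. -/
theorem stmt12 (F : StieltjesFunction ℝ) (A γ : ℝ) (hA : 0 < A) (hγ : 0 < γ)
    (h : Tendsto
      (fun t : ℝ => (∫ α in Ici (0 : ℝ), Real.exp (-t * α) ∂F.measure) / (A * t ^ (-γ)))
      (nhdsWithin 0 (Ioi 0)) (nhds 1)) :
    Tendsto (fun τ : ℝ => F τ / (A * τ ^ γ / Real.Gamma (γ + 1))) atTop (nhds 1) := by
  have hΓ1 : 0 < Real.Gamma (γ+1) := Real.Gamma_pos_of_pos (by linarith)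
  -- Step A : the rescaled measure of [0, 1/t]
  have key : Tendsto (fun t : ℝ => (F.measure (Icc 0 (1/t))).toReal / (A * t ^ (-γ)))
      (nhdsWithin 0 (Ioi 0)) (nhds (1/Real.Gamma (γ+1))) := by
    rw [Metric.tendsto_nhds]
    intro ε hε
    obtain ⟨n, c₁, c₂, hlow, hhigh, hc1a, hc1b, hc2a, hc2b⟩ := approx hγ (half_pos hε)
    have h₁ := tendsto_poly hA hγ h n c₁
    have h₂ := tendsto_poly hA hγ h n c₂
    set L₁ : ℝ := ∑ k ∈ Finset.range n, c₁ k * ((k:ℝ)+1) ^ (-γ:ℝ) with hL₁def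
    set L₂ : ℝ := ∑ k ∈ Finset.range n, c₂ k * ((k:ℝ)+1) ^ (-γ:ℝ) with hL₂def
    have hev₁ : ∀ᶠ t in nhdsWithin (0:ℝ) (Ioi 0), L₁ - ε/2 <
        (∫ α in Ici (0:ℝ), (∑ k ∈ Finset.range n, c₁ k * Real.exp (-t*α) ^ (k+1)) ∂F.measure)
          / (A * t ^ (-γ)) :=
      h₁.eventually (lt_mem_nhds (by linarith))
    have hev₂ : ∀ᶠ t in nhdsWithin (0:ℝ) (Ioi 0),
        (∫ α in Ici (0:ℝ), (∑ k ∈ Finset.range n, c₂ k * Real.exp (-t*α) ^ (k+1)) ∂F.measure)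
          / (A * t ^ (-γ)) < L₂ + ε/2 :=
      h₂.eventually (gt_mem_nhds (by linarith))
    filter_upwards [hev₁, hev₂, eventually_mem_nhdsWithin] with t h1t h2t hmem
    have ht : 0 < t := hmem
    have hD : 0 < A * t ^ (-γ) := by
      have := Real.rpow_pos_of_pos ht (-γ)
      positivity
    -- membership of exp (-t α) in [0,1]
    have hvmem : ∀ α : ℝ, α ∈ Ici (0:ℝ) → Real.exp (-t*α) ∈ Icc (0:ℝ) 1 := by
      intro α hα
      refine ⟨(Real.exp_pos _).le, ?_⟩
      rw [← Real.exp_zero]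
      refine Real.exp_le_exp.2 ?_
      have : 0 ≤ t * α := mul_nonneg ht.le hα
      linarith
    -- the middle integral equals the measure of [0, 1/t]
    have hcond : ∀ α ∈ Ici (0:ℝ),
        (if Real.exp (-1) ≤ Real.exp (-t*α) then (1:ℝ) else 0)
        = (Iic (1/t)).indicator (fun _ => (1:ℝ)) α := by
      intro α hα
      rw [indicator_apply]
      by_cases hc : α ≤ 1/t
      · have h1 : t * α ≤ 1 := by
          have := (le_div_iff₀ ht).1 hc
          linarith
        rw [if_pos (Real.exp_le_exp.2 (by linarith)), if_pos (mem_Iic.2 hc)]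
      · push_neg at hc
        have h1 : 1 < t * α := by
          have := (div_lt_iff₀ ht).1 hc
          linarith
        rw [if_neg (fun hcc => absurd (Real.exp_le_exp.1 hcc) (by simp; linarith)),
          if_neg (fun hcc => absurd (mem_Iic.1 hcc) (not_le.2 hc))]
    have hmid : ∫ α in Ici (0:ℝ),
        (if Real.exp (-1) ≤ Real.exp (-t*α) then (1:ℝ) else 0) ∂F.measure
        = (F.measure (Icc 0 (1/t))).toReal := by
      rw [setIntegral_congr_fun measurableSet_Ici hcond,
        setIntegral_indicator measurableSet_Iic, setIntegral_const, smul_eq_mul, mul_one,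
        Ici_inter_Iic]
      rfl
    have hmid_int : IntegrableOn
        (fun α : ℝ => if Real.exp (-1) ≤ Real.exp (-t*α) then (1:ℝ) else 0)
        (Ici 0) F.measure := by
      refine (integrableOn_congr_fun hcond measurableSet_Ici).2 ?_
      rw [IntegrableOn, integrable_indicator_iff measurableSet_Iic, IntegrableOn,
        Measure.restrict_restrict measurableSet_Iic]
      refine integrableOn_const ?_
      rw [inter_comm, Ici_inter_Iic, F.measure_Icc]
      exact ENNReal.ofReal_ne_top
    -- sandwich the measure between the two polynomial integrals
    have hI₁ : (∫ α in Ici (0:ℝ),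
        (∑ k ∈ Finset.range n, c₁ k * Real.exp (-t*α) ^ (k+1)) ∂F.measure)
        ≤ (F.measure (Icc 0 (1/t))).toReal := by
      rw [← hmid]
      refine setIntegral_mono_on (integrable_poly_exp hA hγ h ht n c₁) hmid_int
        measurableSet_Ici (fun α hα => ?_)
      exact hlow _ (hvmem α hα)
    have hI₂ : (F.measure (Icc 0 (1/t))).toReal ≤
        ∫ α in Ici (0:ℝ),
        (∑ k ∈ Finset.range n, c₂ k * Real.exp (-t*α) ^ (k+1)) ∂F.measure := by
      rw [← hmid]
      refine setIntegral_mono_on hmid_int (integrable_poly_exp hA hγ h ht n c₂)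
        measurableSet_Ici (fun α hα => ?_)
      exact hhigh _ (hvmem α hα)
    have hd₁ : (∫ α in Ici (0:ℝ),
        (∑ k ∈ Finset.range n, c₁ k * Real.exp (-t*α) ^ (k+1)) ∂F.measure) / (A * t ^ (-γ))
        ≤ (F.measure (Icc 0 (1/t))).toReal / (A * t ^ (-γ)) := by gcongr
    have hd₂ : (F.measure (Icc 0 (1/t))).toReal / (A * t ^ (-γ)) ≤
        (∫ α in Ici (0:ℝ),
        (∑ k ∈ Finset.range n, c₂ k * Real.exp (-t*α) ^ (k+1)) ∂F.measure)
          / (A * t ^ (-γ)) := by gcongr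
    rw [Real.dist_eq, abs_lt]
    constructor <;> linarith
  -- Step B : switch to τ → ∞
  have key2 : Tendsto (fun τ : ℝ => (F.measure (Icc 0 τ)).toReal / (A * τ ^ γ)) atTop
      (nhds (1/Real.Gamma (γ+1))) := by
    have hinv : Tendsto (fun τ : ℝ => 1/τ) atTop (nhdsWithin 0 (Ioi 0)) := by
      refine tendsto_nhdsWithin_of_tendsto_nhds_of_eventually_within _ ?_ ?_
      · simpa only [one_div] using tendsto_inv_atTop_zero
      · filter_upwards [eventually_gt_atTop 0] with τ hτ
        exact mem_Ioi.2 (by positivity)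
    refine (key.comp hinv).congr' ?_
    filter_upwards [eventually_gt_atTop 0] with τ hτ
    simp only [Function.comp]
    rw [one_div_one_div, one_div, Real.inv_rpow hτ.le, ← Real.rpow_neg hτ.le, neg_neg]
  -- Step C : express F τ via the measure
  have hFτ : ∀ τ : ℝ, 0 ≤ τ → F τ = (F.measure (Icc 0 τ)).toReal + Function.leftLim F 0 := by
    intro τ hτ
    have h1 : Function.leftLim F 0 ≤ F 0 := F.mono.leftLim_le le_rfl
    have h2 : F 0 ≤ F τ := F.mono hτ
    rw [F.measure_Icc, ENNReal.toReal_ofReal (by linarith)]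
    ring
  -- Step D : conclude
  have hlim2 : Tendsto (fun τ : ℝ => (A * τ ^ γ)⁻¹) atTop (nhds 0) :=
    (Tendsto.const_mul_atTop hA (tendsto_rpow_atTop hγ)).inv_tendsto_atTop
  have hfin : Tendsto (fun τ : ℝ => Real.Gamma (γ+1) * ((F.measure (Icc 0 τ)).toReal
      / (A * τ ^ γ)) + (Function.leftLim F 0 * Real.Gamma (γ+1)) * (A * τ ^ γ)⁻¹) atTop
      (nhds (Real.Gamma (γ+1) * (1/Real.Gamma (γ+1))
        + (Function.leftLim F 0 * Real.Gamma (γ+1)) * 0)) :=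
    (key2.const_mul _).add (hlim2.const_mul _)
  rw [mul_zero, add_zero, mul_one_div_cancel hΓ1.ne'] at hfin
  refine hfin.congr' ?_
  filter_upwards [eventually_gt_atTop 0] with τ hτ
  have hD : 0 < A * τ ^ γ := by
    have := Real.rpow_pos_of_pos hτ γ
    positivity
  rw [hFτ τ hτ.le]
  field_simp
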